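/- For all integers m, n ≥ 2, there exist languages K and L over the three-letter alphabet {a, b, c} with state complexities κ(K) = m and κ(L) = n such that in the subset automaton of the shuffle NFA 𝒩 for K ⧢ L, no two distinct subsets of the state set Q_K × Q_L are equivalent; in particular, all 2^{mn} subsets are pairwise distinguishable. -/

import Mathlib

/-- `IsShuffleOf u v w` means that the word `w` is a shuffle (interleaving)
of the words `u` and `v`. -/
inductive IsShuffleOf {α : Type*} : List α → List α → List α → Prop
  | nil : IsShuffleOf [] [] []
  | left {a : α} {u v w : List α} : IsShuffleOf u v w → IsShuffleOf (a :: u) v (a :: w)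
  | right {a : α} {u v w : List α} : IsShuffleOf u v w → IsShuffleOf u (a :: v) (a :: w)

/-- The shuffle `K ⧢ L` of two languages. -/
def shuffleLang {α : Type*} (K L : Language α) : Language α :=
  {w | ∃ u ∈ K, ∃ v ∈ L, IsShuffleOf u v w}

/-- The shuffle NFA `𝒩` built from two complete DFAs `𝒦` and `ℒ`. -/
def shuffleNFA {α σK σL : Type*} (K : DFA α σK) (L : DFA α σL) : NFA α (σK × σL) where
  step := fun pq a => {(K.step pq.1 a, pq.2), (pq.1, L.step pq.2 a)}
  start := {(K.start, L.start)}
  accept := {pq | pq.1 ∈ K.accept ∧ pq.2 ∈ L.accept}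

/-- `IsStateComplexity L m` says the minimal complete DFA recognizing `L`
has exactly `m` states. -/
def IsStateComplexity {α : Type*} (L : Language α) (m : ℕ) : Prop :=
  (∃ (σ : Type) (_ : Fintype σ) (M : DFA α σ), M.accepts = L ∧ Fintype.card σ = m) ∧
  (∀ (σ : Type) (_ : Fintype σ) (M : DFA α σ), M.accepts = L → m ≤ Fintype.card σ)

namespace Stmt16Aux

lemma mod_two_regions {m k : ℕ} (hm : 0 < m) (hk : k < 2 * m) :
    k % m = if k < m then k else k - m := by
  split_ifs with h
  · exact Nat.mod_eq_of_lt h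
  · rw [Nat.mod_eq_sub_mod (le_of_not_gt h), Nat.mod_eq_of_lt (by omega)]

def KD (m : ℕ) (hm : 2 ≤ m) : DFA (Fin 3) (Fin m) where
  step := fun p x => if x = 1 then ⟨0, by omega⟩ else ⟨(p.val + 1) % m, Nat.mod_lt _ (by omega)⟩
  start := ⟨0, by omega⟩
  accept := {p | p.val = m - 1}

def LD (n : ℕ) (hn : 2 ≤ n) : DFA (Fin 3) (Fin n) where
  step := fun q x => if x = 1 then ⟨(q.val + 1) % n, Nat.mod_lt _ (by omega)⟩
    else if x = 0 then ⟨0, by omega⟩ else ⟨1, by omega⟩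
  start := ⟨0, by omega⟩
  accept := {q | q.val = n - 1}

lemma dfa_evalFrom_cons {α σ : Type*} (M : DFA α σ) (s : σ) (a : α) (w : List α) :
    M.evalFrom s (a :: w) = M.evalFrom (M.step s a) w := rfl

lemma nfa_evalFrom_cons {α σ : Type*} (N : NFA α σ) (S : Set σ) (a : α) (w : List α) :
    N.evalFrom S (a :: w) = N.evalFrom (N.stepSet S a) w := rfl

lemma nfa_evalFrom_append {α σ : Type*} (N : NFA α σ) (S : Set σ) (u v : List α) :
    N.evalFrom S (u ++ v) = N.evalFrom (N.evalFrom S u) v :=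
  List.foldl_append

lemma nfa_mem_evalFrom {α σ : Type*} (N : NFA α σ) (w : List α) :
    ∀ (S : Set σ) (y : σ), y ∈ N.evalFrom S w ↔ ∃ x ∈ S, y ∈ N.evalFrom {x} w := by
  induction w with
  | nil => intro S y; simp
  | cons a w ih =>
    intro S y
    rw [nfa_evalFrom_cons, ih]
    constructor
    · rintro ⟨z, hz, hy⟩
      rw [NFA.mem_stepSet] at hz
      obtain ⟨x, hx, hzx⟩ := hz
      refine ⟨x, hx, ?_⟩
      rw [nfa_evalFrom_cons, ih]
      refine ⟨z, ?_, hy⟩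
      simp [NFA.mem_stepSet, hzx]
    · rintro ⟨x, hx, hy⟩
      rw [nfa_evalFrom_cons, ih] at hy
      obtain ⟨z, hz, hy⟩ := hy
      simp [NFA.mem_stepSet] at hz
      exact ⟨z, by rw [NFA.mem_stepSet]; exact ⟨x, hx, hz⟩, hy⟩

lemma evalFrom_pair {α σ : Type*} (N : NFA α σ) (A B : σ) (w : List α) (y : σ) :
    y ∈ N.evalFrom {A, B} w ↔ y ∈ N.evalFrom {A} w ∨ y ∈ N.evalFrom {B} w := by
  rw [nfa_mem_evalFrom]
  constructor
  · rintro ⟨x, hx, hy⟩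
    rcases hx with rfl | rfl
    · exact Or.inl hy
    · exact Or.inr hy
  · rintro (h | h)
    · exact ⟨A, Or.inl rfl, h⟩
    · exact ⟨B, Or.inr rfl, h⟩

lemma K_eval_rep (m : ℕ) (hm : 2 ≤ m) (p : Fin m) (s : ℕ) :
    (KD m hm).evalFrom p (List.replicate s 0) = ⟨(p.val + s) % m, Nat.mod_lt _ (by omega)⟩ := by
  induction s generalizing p with
  | zero => simp [Fin.ext_iff, Nat.mod_eq_of_lt p.isLt]
  | succ s ih =>
    rw [List.replicate_succ, dfa_evalFrom_cons]
    have hstep : (KD m hm).step p 0 = ⟨(p.val + 1) % m, Nat.mod_lt _ (by omega)⟩ := by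
      simp [KD]
    rw [hstep, ih]
    apply Fin.ext
    show ((p.val + 1) % m + s) % m = (p.val + (s + 1)) % m
    rw [Nat.mod_add_mod]
    congr 1
    omega

lemma L_eval_rep (n : ℕ) (hn : 2 ≤ n) (q : Fin n) (t : ℕ) :
    (LD n hn).evalFrom q (List.replicate t 1) = ⟨(q.val + t) % n, Nat.mod_lt _ (by omega)⟩ := by
  induction t generalizing q with
  | zero => simp [Fin.ext_iff, Nat.mod_eq_of_lt q.isLt]
  | succ t ih =>
    rw [List.replicate_succ, dfa_evalFrom_cons]
    have hstep : (LD n hn).step q 1 = ⟨(q.val + 1) % n, Nat.mod_lt _ (by omega)⟩ := by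
      simp [LD]
    rw [hstep, ih]
    apply Fin.ext
    show ((q.val + 1) % n + t) % n = (q.val + (t + 1)) % n
    rw [Nat.mod_add_mod]
    congr 1
    omega


lemma K_accepts_rep (m : ℕ) (hm : 2 ≤ m) (k : ℕ) :
    List.replicate k 0 ∈ (KD m hm).accepts ↔ k % m = m - 1 := by
  rw [DFA.mem_accepts]
  simp only [DFA.eval]
  rw [show (KD m hm).start = ⟨0, by omega⟩ from rfl, K_eval_rep]
  simp [KD]

lemma L_accepts_rep (n : ℕ) (hn : 2 ≤ n) (k : ℕ) :
    List.replicate k 1 ∈ (LD n hn).accepts ↔ k % n = n - 1 := by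
  rw [DFA.mem_accepts]
  simp only [DFA.eval]
  rw [show (LD n hn).start = ⟨0, by omega⟩ from rfl, L_eval_rep]
  simp [LD]

lemma min_generic {m : ℕ} (hm : 2 ≤ m) (σ : Type) [Fintype σ] (M : DFA (Fin 3) σ)
    (x : Fin 3)
    (hacc : ∀ k : ℕ, List.replicate k x ∈ M.accepts ↔ k % m = m - 1) :
    m ≤ Fintype.card σ := by
  have hinj : Function.Injective
      (fun p : Fin m => M.evalFrom M.start (List.replicate p.val x)) := by
    intro p p' h
    simp only at h
    have key : ∀ z : List (Fin 3),
        (List.replicate p.val x ++ z) ∈ M.accepts ↔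
        (List.replicate p'.val x ++ z) ∈ M.accepts := by
      intro z
      rw [DFA.mem_accepts, DFA.mem_accepts]
      simp only [DFA.eval]
      rw [DFA.evalFrom_of_append, DFA.evalFrom_of_append, h]
    have key2 := key (List.replicate (m - 1 - p.val) x)
    rw [← List.replicate_add, ← List.replicate_add, hacc, hacc] at key2
    have h1 : (p.val + (m - 1 - p.val)) % m = m - 1 := by
      rw [Nat.mod_eq_of_lt (by omega)]
      omega
    have h2 := key2.mp h1
    have hb : p'.val + (m - 1 - p.val) < 2 * m := by omega
    rw [mod_two_regions (by omega) hb] at h2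
    apply Fin.ext
    split_ifs at h2 <;> omega
  calc m = Fintype.card (Fin m) := (Fintype.card_fin m).symm
    _ ≤ Fintype.card σ := Fintype.card_le_of_injective _ hinj

lemma K_isSC (m : ℕ) (hm : 2 ≤ m) : IsStateComplexity (KD m hm).accepts m := by
  constructor
  · exact ⟨Fin m, inferInstance, KD m hm, rfl, Fintype.card_fin m⟩
  · intro σ _ M hM
    exact min_generic hm σ M 0 (fun k => by rw [hM]; exact K_accepts_rep m hm k)

lemma L_isSC (n : ℕ) (hn : 2 ≤ n) : IsStateComplexity (LD n hn).accepts n := by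
  constructor
  · exact ⟨Fin n, inferInstance, LD n hn, rfl, Fintype.card_fin n⟩
  · intro σ _ M hM
    exact min_generic hn σ M 1 (fun k => by rw [hM]; exact L_accepts_rep n hn k)


section Blocks

variable {m n : ℕ}

lemma evalA (hm : 2 ≤ m) (hn : 2 ≤ n) (x : Fin 3) (r : Fin n)
    (hxK : ∀ p : Fin m, (KD m hm).step p x = ⟨(p.val + 1) % m, Nat.mod_lt _ (by omega)⟩)
    (hxL : ∀ q : Fin n, (LD n hn).step q x = r)
    (s : ℕ) (p : Fin m) (q : Fin n) (y : Fin m × Fin n) :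
    y ∈ (shuffleNFA (KD m hm) (LD n hn)).evalFrom {(p, q)} (List.replicate s x) ↔
      y = (⟨(p.val + s) % m, Nat.mod_lt _ (by omega)⟩, q) ∨
      ∃ k < s, y = (⟨(p.val + k) % m, Nat.mod_lt _ (by omega)⟩, r) := by
  induction s generalizing p q with
  | zero =>
    simp [Nat.mod_eq_of_lt p.isLt, Fin.eta]
  | succ s ih =>
    rw [List.replicate_succ, nfa_evalFrom_cons]
    have hstep : (shuffleNFA (KD m hm) (LD n hn)).stepSet {(p, q)} x =
        {((⟨(p.val + 1) % m, Nat.mod_lt _ (by omega)⟩ : Fin m), q), (p, r)} := by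
      rw [show (shuffleNFA (KD m hm) (LD n hn)).stepSet {(p, q)} x
            = (shuffleNFA (KD m hm) (LD n hn)).step (p, q) x from by
        simp [NFA.stepSet]]
      show ({((KD m hm).step p x, q), (p, (LD n hn).step q x)} : Set _) = _
      rw [hxK, hxL]
    rw [hstep, evalFrom_pair, ih, ih]
    have e1 : ∀ k : ℕ, (((p.val + 1) % m : ℕ) + k) % m = (p.val + (k + 1)) % m := by
      intro k
      rw [Nat.mod_add_mod]
      congr 1
      omega
    simp only [Fin.val_mk, e1]
    constructor
    · rintro ((h | ⟨k, hk, h⟩) | (h | ⟨k, hk, h⟩))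
      · exact Or.inl h
      · exact Or.inr ⟨k + 1, by omega, h⟩
      · exact Or.inr ⟨s, by omega, h⟩
      · exact Or.inr ⟨k, by omega, h⟩
    · rintro (h | ⟨k, hk, h⟩)
      · exact Or.inl (Or.inl h)
      · by_cases hks : k = s
        · subst hks
          exact Or.inr (Or.inl h)
        · exact Or.inr (Or.inr ⟨k, by omega, h⟩)

lemma evalB (hm : 2 ≤ m) (hn : 2 ≤ n)
    (t : ℕ) (p : Fin m) (q : Fin n) (y : Fin m × Fin n) :
    y ∈ (shuffleNFA (KD m hm) (LD n hn)).evalFrom {(p, q)} (List.replicate t 1) ↔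
      y = (p, ⟨(q.val + t) % n, Nat.mod_lt _ (by omega)⟩) ∨
      ∃ l < t, y = (⟨0, by omega⟩, ⟨(q.val + l) % n, Nat.mod_lt _ (by omega)⟩) := by
  induction t generalizing p q with
  | zero =>
    simp [Nat.mod_eq_of_lt q.isLt, Fin.eta]
  | succ t ih =>
    rw [List.replicate_succ, nfa_evalFrom_cons]
    have hstep : (shuffleNFA (KD m hm) (LD n hn)).stepSet {(p, q)} 1 =
        {((⟨0, by omega⟩ : Fin m), q),
          (p, (⟨(q.val + 1) % n, Nat.mod_lt _ (by omega)⟩ : Fin n))} := by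
      rw [show (shuffleNFA (KD m hm) (LD n hn)).stepSet {(p, q)} 1
            = (shuffleNFA (KD m hm) (LD n hn)).step (p, q) 1 from by
        simp [NFA.stepSet]]
      show ({((KD m hm).step p 1, q), (p, (LD n hn).step q 1)} : Set _) = _
      rw [show (KD m hm).step p 1 = ⟨0, by omega⟩ from by simp [KD],
        show (LD n hn).step q 1 = ⟨(q.val + 1) % n, Nat.mod_lt _ (by omega)⟩ from by simp [LD]]
    rw [hstep, evalFrom_pair, ih, ih]
    have e1 : ∀ l : ℕ, (((q.val + 1) % n : ℕ) + l) % n = (q.val + (l + 1)) % n := by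
      intro l
      rw [Nat.mod_add_mod]
      congr 1
      omega
    simp only [Fin.val_mk, e1]
    constructor
    · rintro ((h | ⟨l, hl, h⟩) | (h | ⟨l, hl, h⟩))
      · exact Or.inr ⟨t, by omega, h⟩
      · exact Or.inr ⟨l, by omega, h⟩
      · exact Or.inl h
      · exact Or.inr ⟨l + 1, by omega, h⟩
    · rintro (h | ⟨l, hl, h⟩)
      · exact Or.inr (Or.inl h)
      · by_cases hlt : l = t
        · subst hlt
          exact Or.inl (Or.inl h)
        · exact Or.inl (Or.inr ⟨l, by omega, h⟩)

end Blocks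


lemma char (hm : 2 ≤ m) (hn : 2 ≤ n) (i : Fin m) (j : Fin n) :
    ∃ w : List (Fin 3), ∀ p q,
      (((⟨m - 1, by omega⟩, ⟨n - 1, by omega⟩) : Fin m × Fin n)
        ∈ (shuffleNFA (KD m hm) (LD n hn)).evalFrom {(p, q)} w) ↔ (p = i ∧ q = j) := by
  classical
  have hi := i.isLt
  have hj := j.isLt
  set x : Fin 3 := if j.val = 0 then 2 else 0 with hx
  set r : Fin n := if j.val = 0 then ⟨1, by omega⟩ else ⟨0, by omega⟩ with hr
  have hxK : ∀ p : Fin m, (KD m hm).step p x = ⟨(p.val + 1) % m, Nat.mod_lt _ (by omega)⟩ := by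
    intro p
    by_cases h : j.val = 0 <;> simp [KD, hx, h]
  have hxL : ∀ q : Fin n, (LD n hn).step q x = r := by
    intro q
    by_cases h : j.val = 0 <;> simp [LD, hx, hr, h]
  refine ⟨List.replicate (m - 1 - i.val) x ++ List.replicate (n - 1 - j.val) 1, fun p q => ?_⟩
  have hp := p.isLt
  have hq := q.isLt
  rw [nfa_evalFrom_append, nfa_mem_evalFrom]
  constructor
  · rintro ⟨⟨z1, z2⟩, hz, hmem⟩
    rw [evalA hm hn x r hxK hxL] at hz
    rw [evalB hm hn] at hmem
    rcases hmem with heq | ⟨l, hl, heq⟩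
    swap
    · exfalso
      rw [Prod.ext_iff] at heq
      have := congrArg Fin.val heq.1
      simp at this
      omega
    rw [Prod.ext_iff] at heq
    have h1 : z1.val = m - 1 := by
      have := congrArg Fin.val heq.1
      simpa using this.symm
    have h2 : (z2.val + (n - 1 - j.val)) % n = n - 1 := by
      have := congrArg Fin.val heq.2
      simpa using this.symm
    rcases hz with hz | ⟨k, hk, hz⟩
    · rw [Prod.ext_iff] at hz
      have hz1 : z1.val = (p.val + (m - 1 - i.val)) % m := by
        have := congrArg Fin.val hz.1; simpa using this
      have hz2 : z2 = q := hz.2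
      rw [hz2] at h2
      have hb1 : p.val + (m - 1 - i.val) < 2 * m := by omega
      have hb2 : q.val + (n - 1 - j.val) < 2 * n := by omega
      rw [mod_two_regions (by omega) hb1] at hz1
      rw [mod_two_regions (by omega) hb2] at h2
      constructor
      · apply Fin.ext
        split_ifs at hz1 <;> omega
      · apply Fin.ext
        split_ifs at h2 <;> omega
    · exfalso
      rw [Prod.ext_iff] at hz
      have hz2 : z2 = r := hz.2
      rw [hz2] at h2
      by_cases h : j.val = 0
      · have hrv : r.val = 1 := by rw [hr]; simp [h]
        rw [hrv] at h2
        have he : 1 + (n - 1 - j.val) = n := by omega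
        rw [he, Nat.mod_self] at h2
        omega
      · have hrv : r.val = 0 := by rw [hr]; simp [h]
        rw [hrv] at h2
        rw [Nat.mod_eq_of_lt (by omega)] at h2
        omega
  · rintro ⟨rfl, rfl⟩
    refine ⟨(⟨(p.val + (m - 1 - p.val)) % m, Nat.mod_lt _ (by omega)⟩, q), ?_, ?_⟩
    · rw [evalA hm hn x r hxK hxL]
      exact Or.inl rfl
    · rw [evalB hm hn]
      left
      have h1 : (p.val + (m - 1 - p.val)) % m = m - 1 := by
        rw [Nat.mod_eq_of_lt (by omega)]; omega
      have h2 : (q.val + (n - 1 - q.val)) % n = n - 1 := by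
        rw [Nat.mod_eq_of_lt (by omega)]; omega
      simp [Prod.ext_iff, Fin.ext_iff, h1, h2]

end Stmt16Aux

open Stmt16Aux

/-- For all `m, n ≥ 2` there are languages over a three-letter alphabet, given by
minimal complete DFAs with `m` and `n` states (so `κ(K) = m`, `κ(L) = n`), such that
in the subset automaton of the shuffle NFA `𝒩` no two distinct subsets of
`Q_K × Q_L` are equivalent; in particular all `2^(mn)` subsets are pairwise
distinguishable. -/
theorem stmt_16 (m n : ℕ) (hm : 2 ≤ m) (hn : 2 ≤ n) :
    ∃ (K : DFA (Fin 3) (Fin m)) (L : DFA (Fin 3) (Fin n)),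
      IsStateComplexity K.accepts m ∧ IsStateComplexity L.accepts n ∧
      ∀ S T : Set (Fin m × Fin n), S ≠ T →
        ∃ w : List (Fin 3),
          ¬ (((shuffleNFA K L).evalFrom S w ∩ (shuffleNFA K L).accept).Nonempty ↔
             ((shuffleNFA K L).evalFrom T w ∩ (shuffleNFA K L).accept).Nonempty) := by
  refine ⟨KD m hm, LD n hn, K_isSC m hm, L_isSC n hn, ?_⟩
  have hAcc : (shuffleNFA (KD m hm) (LD n hn)).accept =
      {((⟨m - 1, by omega⟩, ⟨n - 1, by omega⟩) : Fin m × Fin n)} := by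
    ext ⟨y1, y2⟩
    show (y1 ∈ (KD m hm).accept ∧ y2 ∈ (LD n hn).accept) ↔ _
    simp only [Set.mem_singleton_iff, Prod.ext_iff, Fin.ext_iff]
    exact Iff.rfl
  intro S T hST
  have hne : ∃ z : Fin m × Fin n, (z ∈ S ∧ z ∉ T) ∨ (z ∈ T ∧ z ∉ S) := by
    by_contra h
    push_neg at h
    apply hST
    ext z
    have := h z
    tauto
  obtain ⟨⟨i, j⟩, hz⟩ := hne
  obtain ⟨w, hw⟩ := char hm hn i j
  have hX : ∀ X : Set (Fin m × Fin n),
      (((shuffleNFA (KD m hm) (LD n hn)).evalFrom X w ∩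
        (shuffleNFA (KD m hm) (LD n hn)).accept).Nonempty) ↔ (i, j) ∈ X := by
    intro X
    rw [hAcc, Set.inter_singleton_nonempty, nfa_mem_evalFrom]
    constructor
    · rintro ⟨⟨p, q⟩, hpq, hmem⟩
      rw [hw p q] at hmem
      obtain ⟨rfl, rfl⟩ := hmem
      exact hpq
    · intro h
      exact ⟨(i, j), h, (hw i j).mpr ⟨rfl, rfl⟩⟩
  rcases hz with ⟨hS, hT⟩ | ⟨hT, hS⟩
  · exact ⟨w, fun hiff => hT ((hX T).mp (hiff.mp ((hX S).mpr hS)))⟩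
  · exact ⟨w, fun hiff => hS ((hX S).mp (hiff.mpr ((hX T).mpr hT)))⟩
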